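/- (Lipschitz continuity of the Bellman operator pair.) Let 𝒳, 𝒜 be finite sets, h, γ > 0, f a cost with |f(x,a,μ₁) − f(x,a,μ₂)| ≤ L_f ‖μ₁−μ₂‖_TV, and p(x'|x,a,μ) transition probabilities with Σ_{x'} |p(x'|x,a,μ₁) − p(x'|x,a,μ₂)| ≤ L_p ‖μ₁−μ₂‖_TV for all x,a. Define the Bellman operator ℬ_μ(Q)(x,a) = h f(x,a,μ) + e^{−γh} Σ_{x'} p(x'|x,a,μ) min_{a'} Q(x',a'). Then for all Q₁, Q₂ : 𝒳 × 𝒜 → ℝ and probability distributions μ₁, μ₂ on 𝒳: ‖ℬ_{μ₁}(Q₁) − ℬ_{μ₂}(Q₂)‖_∞ ≤ (h L_f + e^{−γh} L_p ‖Q₁‖_∞) ‖μ₁ − μ₂‖_TV + e^{−γh} ‖Q₁ − Q₂‖_∞. -/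
import Mathlib


open Finset

/-- A probability distribution on a finite set. -/
def IsProb {𝒳 : Type*} [Fintype 𝒳] (μ : 𝒳 → ℝ) : Prop :=
  (∀ x, 0 ≤ μ x) ∧ ∑ x, μ x = 1

/-- Total variation norm: `‖m‖_TV = sup_{A ⊆ 𝒳} |Σ_{x∈A} m(x)|`. -/
noncomputable def tvNorm {𝒳 : Type*} [Fintype 𝒳] (m : 𝒳 → ℝ) : ℝ :=
  ⨆ A : Finset 𝒳, |∑ x ∈ A, m x|

/-- Sup norm `‖Q‖_∞ = max_{(x,a)} |Q(x,a)|` for `Q : 𝒳 × 𝒜 → ℝ`. -/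
noncomputable def supNorm {𝒳 𝒜 : Type*} [Fintype 𝒳] [Fintype 𝒜] (Q : 𝒳 → 𝒜 → ℝ) : ℝ :=
  ⨆ q : 𝒳 × 𝒜, |Q q.1 q.2|

section Aux

variable {𝒳 𝒜 : Type*} [Fintype 𝒳] [Fintype 𝒜] [Nonempty 𝒳] [Nonempty 𝒜]

lemma abs_le_supNorm (Q : 𝒳 → 𝒜 → ℝ) (x : 𝒳) (a : 𝒜) : |Q x a| ≤ supNorm Q :=
  le_ciSup (f := fun q : 𝒳 × 𝒜 => |Q q.1 q.2|) (Set.finite_range _).bddAbove ⟨x, a⟩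

lemma supNorm_nonneg (Q : 𝒳 → 𝒜 → ℝ) : 0 ≤ supNorm Q :=
  le_trans (abs_nonneg _) (abs_le_supNorm Q (Classical.arbitrary _) (Classical.arbitrary _))

lemma iInf_eq_min (Q : 𝒳 → 𝒜 → ℝ) (x : 𝒳) : ∃ a₀, (⨅ a, Q x a) = Q x a₀ := by
  obtain ⟨a₀, ha₀⟩ := Finite.exists_min (Q x)
  exact ⟨a₀, le_antisymm (ciInf_le (Set.finite_range _).bddBelow a₀) (le_ciInf ha₀)⟩

lemma abs_iInf_le (Q : 𝒳 → 𝒜 → ℝ) (x : 𝒳) : |⨅ a, Q x a| ≤ supNorm Q := by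
  obtain ⟨a₀, ha₀⟩ := iInf_eq_min Q x
  rw [ha₀]; exact abs_le_supNorm Q x a₀

lemma abs_iInf_sub_iInf (Q₁ Q₂ : 𝒳 → 𝒜 → ℝ) (x : 𝒳) :
    |(⨅ a, Q₁ x a) - ⨅ a, Q₂ x a| ≤ supNorm (fun x a => Q₁ x a - Q₂ x a) := by
  rw [abs_sub_le_iff]
  constructor
  · obtain ⟨a₀, ha₀⟩ := iInf_eq_min Q₂ x
    have h1 : (⨅ a, Q₁ x a) ≤ Q₁ x a₀ := ciInf_le (Set.finite_range _).bddBelow a₀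
    have h2 : Q₁ x a₀ - Q₂ x a₀ ≤ |Q₁ x a₀ - Q₂ x a₀| := le_abs_self _
    have h3 := abs_le_supNorm (fun x a => Q₁ x a - Q₂ x a) x a₀
    rw [ha₀]; linarith
  · obtain ⟨a₀, ha₀⟩ := iInf_eq_min Q₁ x
    have h1 : (⨅ a, Q₂ x a) ≤ Q₂ x a₀ := ciInf_le (Set.finite_range _).bddBelow a₀
    have h2 : -(Q₁ x a₀ - Q₂ x a₀) ≤ |Q₁ x a₀ - Q₂ x a₀| := neg_le_abs _
    have h3 := abs_le_supNorm (fun x a => Q₁ x a - Q₂ x a) x a₀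
    rw [ha₀]; linarith

end Aux

/-- Lipschitz continuity of the Bellman operator pair:
`‖ℬ_{μ₁}(Q₁) − ℬ_{μ₂}(Q₂)‖_∞ ≤ (h L_f + e^{−γh} L_p ‖Q₁‖_∞)‖μ₁−μ₂‖_TV + e^{−γh}‖Q₁−Q₂‖_∞`,
where `ℬ_μ(Q)(x,a) = h f(x,a,μ) + e^{−γh} Σ_{x'} p(x'|x,a,μ) min_{a'} Q(x',a')`. -/
theorem bellman_operator_lipschitz {𝒳 𝒜 : Type*} [Fintype 𝒳] [Fintype 𝒜]
    [Nonempty 𝒳] [Nonempty 𝒜]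
    (h γ Lf Lp : ℝ) (hh : 0 < h) (hγ : 0 < γ)
    (f : 𝒳 → 𝒜 → (𝒳 → ℝ) → ℝ)
    (hflip : ∀ x a μ₁ μ₂, |f x a μ₁ - f x a μ₂| ≤ Lf * tvNorm (fun y => μ₁ y - μ₂ y))
    (p : 𝒳 → 𝒳 → 𝒜 → (𝒳 → ℝ) → ℝ)
    (hp : ∀ x a μ, IsProb (fun x' => p x' x a μ))
    (hplip : ∀ x a μ₁ μ₂,
      ∑ x', |p x' x a μ₁ - p x' x a μ₂| ≤ Lp * tvNorm (fun y => μ₁ y - μ₂ y))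
    (Q₁ Q₂ : 𝒳 → 𝒜 → ℝ) (μ₁ μ₂ : 𝒳 → ℝ) (hμ₁ : IsProb μ₁) (hμ₂ : IsProb μ₂) :
    supNorm (fun x a =>
        (h * f x a μ₁ + Real.exp (-γ * h) * ∑ x', p x' x a μ₁ * (⨅ a', Q₁ x' a')) -
        (h * f x a μ₂ + Real.exp (-γ * h) * ∑ x', p x' x a μ₂ * (⨅ a', Q₂ x' a'))) ≤
      (h * Lf + Real.exp (-γ * h) * Lp * supNorm Q₁) * tvNorm (fun y => μ₁ y - μ₂ y) +
        Real.exp (-γ * h) * supNorm (fun x a => Q₁ x a - Q₂ x a) := by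
  set e := Real.exp (-γ * h) with he_def
  have he : 0 < e := Real.exp_pos _
  set T := tvNorm (fun y => μ₁ y - μ₂ y) with hT_def
  set D := supNorm (fun x a => Q₁ x a - Q₂ x a) with hD_def
  set N := supNorm Q₁ with hN_def
  apply ciSup_le
  rintro ⟨x, a⟩
  simp only
  set m₁ : 𝒳 → ℝ := fun x' => ⨅ a', Q₁ x' a' with hm₁
  set m₂ : 𝒳 → ℝ := fun x' => ⨅ a', Q₂ x' a' with hm₂
  have key : ∑ x', p x' x a μ₁ * m₁ x' - ∑ x', p x' x a μ₂ * m₂ x'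
      = ∑ x', ((p x' x a μ₁ - p x' x a μ₂) * m₁ x' + p x' x a μ₂ * (m₁ x' - m₂ x')) := by
    rw [← Finset.sum_sub_distrib]
    apply Finset.sum_congr rfl
    intros; ring
  have hS : |∑ x', p x' x a μ₁ * m₁ x' - ∑ x', p x' x a μ₂ * m₂ x'|
      ≤ Lp * T * N + D := by
    rw [key]
    calc |∑ x', ((p x' x a μ₁ - p x' x a μ₂) * m₁ x' + p x' x a μ₂ * (m₁ x' - m₂ x'))|
        ≤ ∑ x', |(p x' x a μ₁ - p x' x a μ₂) * m₁ x' + p x' x a μ₂ * (m₁ x' - m₂ x')| :=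
          Finset.abs_sum_le_sum_abs _ _
      _ ≤ ∑ x', (|p x' x a μ₁ - p x' x a μ₂| * N + p x' x a μ₂ * D) := by
          apply Finset.sum_le_sum
          intro x' _
          refine le_trans (abs_add_le _ _) (add_le_add ?_ ?_)
          · rw [abs_mul]
            exact mul_le_mul_of_nonneg_left (abs_iInf_le Q₁ x') (abs_nonneg _)
          · rw [abs_mul, abs_of_nonneg ((hp x a μ₂).1 x')]
            exact mul_le_mul_of_nonneg_left (abs_iInf_sub_iInf Q₁ Q₂ x') ((hp x a μ₂).1 x')
      _ = (∑ x', |p x' x a μ₁ - p x' x a μ₂|) * N + (∑ x', p x' x a μ₂) * D := by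
          rw [Finset.sum_add_distrib, Finset.sum_mul, Finset.sum_mul]
      _ ≤ Lp * T * N + 1 * D := by
          have h1 : (∑ x', p x' x a μ₂) = 1 := (hp x a μ₂).2
          rw [h1]
          exact add_le_add (mul_le_mul_of_nonneg_right (hplip x a μ₁ μ₂)
            (supNorm_nonneg Q₁)) le_rfl
      _ = Lp * T * N + D := by ring
  have hf : |f x a μ₁ - f x a μ₂| ≤ Lf * T := hflip x a μ₁ μ₂
  calc |(h * f x a μ₁ + e * ∑ x', p x' x a μ₁ * m₁ x') -
        (h * f x a μ₂ + e * ∑ x', p x' x a μ₂ * m₂ x')|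
      = |h * (f x a μ₁ - f x a μ₂) +
          e * (∑ x', p x' x a μ₁ * m₁ x' - ∑ x', p x' x a μ₂ * m₂ x')| := by ring_nf
    _ ≤ |h * (f x a μ₁ - f x a μ₂)| +
          |e * (∑ x', p x' x a μ₁ * m₁ x' - ∑ x', p x' x a μ₂ * m₂ x')| := abs_add_le _ _
    _ ≤ h * (Lf * T) + e * (Lp * T * N + D) := by
        rw [abs_mul, abs_mul, abs_of_pos hh, abs_of_pos he]
        exact add_le_add (mul_le_mul_of_nonneg_left hf hh.le)
          (mul_le_mul_of_nonneg_left hS he.le)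
    _ = (h * Lf + e * Lp * N) * T + e * D := by ring
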